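/- Let p, q ∈ ℝ and τ ∈ ℍ (upper half plane). The following are equivalent: (1) there exist A > 0 and 0 < δ < 1 such that dist((np, nq), ℤ²) ≥ Aδⁿ for all positive integers n; (2) there exists a > 0 such that sup over (m₁,m₂,m₃) ∈ ℤ³∖{0} of e^{−a·max(|m₁|,|m₂|)} / |τ(pm₂ − m₁) + m₃ − qm₂| is finite. -/

import Mathlib

lemma key_abs (τ : ℂ) (x y : ℝ) :
    ‖τ * x + y‖ = Real.sqrt ((τ.re * x + y) ^ 2 + (τ.im * x) ^ 2) := by
  rw [Complex.norm_def, Complex.normSq_apply]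
  congr 1
  simp [Complex.add_re, Complex.add_im, Complex.mul_re, Complex.mul_im]
  ring

lemma key_lb (τ : ℂ) (hτ : 0 < τ.im) :
    ∃ c : ℝ, 0 < c ∧ ∀ x y : ℝ, c * Real.sqrt (x ^ 2 + y ^ 2) ≤ ‖τ * x + y‖ := by
  set a0 := τ.re
  set b := τ.im
  have hm0 : (0:ℝ) < min (1/2) (b ^ 2 / (1 + 2 * a0 ^ 2)) := by
    apply lt_min (by norm_num)
    positivity
  refine ⟨Real.sqrt (min (1/2) (b ^ 2 / (1 + 2 * a0 ^ 2))), Real.sqrt_pos.2 hm0, ?_⟩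
  intro x y
  set m := min (1/2) (b ^ 2 / (1 + 2 * a0 ^ 2)) with hmdef
  rw [key_abs, ← Real.sqrt_mul hm0.le]
  apply Real.sqrt_le_sqrt
  have h1 : m ≤ 1/2 := min_le_left _ _
  have h2 : m * (1 + 2 * a0 ^ 2) ≤ b ^ 2 := by
    have := min_le_right (1/2 : ℝ) (b ^ 2 / (1 + 2 * a0 ^ 2))
    rw [le_div_iff₀ (by positivity)] at this
    linarith [this]
  nlinarith [mul_nonneg hm0.le (sq_nonneg (2 * a0 * x + y)),
    mul_le_mul_of_nonneg_right h2 (sq_nonneg x),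
    mul_le_mul_of_nonneg_right h1 (sq_nonneg (a0 * x + y))]

lemma key_ub (τ : ℂ) (x y : ℝ) :
    ‖τ * x + y‖ ≤ (‖τ‖ + 1) * Real.sqrt (x ^ 2 + y ^ 2) := by
  have hx : |x| ≤ Real.sqrt (x ^ 2 + y ^ 2) := by
    rw [← Real.sqrt_sq_eq_abs]
    exact Real.sqrt_le_sqrt (by nlinarith [sq_nonneg y])
  have hy : |y| ≤ Real.sqrt (x ^ 2 + y ^ 2) := by
    rw [← Real.sqrt_sq_eq_abs]
    exact Real.sqrt_le_sqrt (by nlinarith [sq_nonneg x])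
  calc ‖τ * x + y‖ ≤ ‖τ * x‖ + ‖(y : ℂ)‖ :=
        norm_add_le _ _
    _ = ‖τ‖ * |x| + |y| := by
        rw [norm_mul, Complex.norm_real, Complex.norm_real, Real.norm_eq_abs, Real.norm_eq_abs]
    _ ≤ ‖τ‖ * Real.sqrt (x ^ 2 + y ^ 2) + Real.sqrt (x ^ 2 + y ^ 2) := by
        have := norm_nonneg τ
        nlinarith
    _ = (‖τ‖ + 1) * Real.sqrt (x ^ 2 + y ^ 2) := by ring

/-- For `p, q ∈ ℝ` and `τ` in the upper half plane, the following are
equivalent: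
(1) there exist `A > 0` and `0 < δ < 1` with `dist((np, nq), ℤ²) ≥ A δ^n` for all `n > 0`;
(2) there exists `a > 0` such that
`sup_{(m₁,m₂,m₃) ∈ ℤ³∖{0}} e^{-a·max(|m₁|,|m₂|)} / |τ(pm₂ − m₁) + m₃ − qm₂| < ∞`
(the finiteness of the sup is expressed as a bound `M`, multiplied through to avoid
division by a possibly vanishing denominator). -/
theorem stmt4 (p q : ℝ) (τ : ℂ) (hτ : 0 < τ.im) :
    (∃ A : ℝ, 0 < A ∧ ∃ δ : ℝ, 0 < δ ∧ δ < 1 ∧ ∀ n : ℕ, 0 < n → ∀ m₁ m₂ : ℤ,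
        A * δ ^ n ≤ Real.sqrt ((n * p - m₁) ^ 2 + (n * q - m₂) ^ 2)) ↔
      (∃ a : ℝ, 0 < a ∧ ∃ M : ℝ, ∀ m₁ m₂ m₃ : ℤ, (m₁, m₂, m₃) ≠ (0, 0, 0) →
        Real.exp (-a * max |(m₁ : ℝ)| |(m₂ : ℝ)|) ≤
          M * ‖τ * ((p : ℂ) * m₂ - m₁) + m₃ - (q : ℂ) * m₂‖) := by
  obtain ⟨c, hc, hlb⟩ := key_lb τ hτ
  constructor
  · rintro ⟨A, hA, δ, hδ0, hδ1, h⟩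
    have hlog : Real.log δ < 0 := Real.log_neg hδ0 hδ1
    refine ⟨-Real.log δ, by linarith, max (1/A) 1 / c, ?_⟩
    intro m₁ m₂ m₃ hne
    set x : ℝ := p * m₂ - m₁ with hx
    set y : ℝ := (m₃ : ℝ) - q * m₂ with hy
    have hL : τ * ((p : ℂ) * m₂ - m₁) + m₃ - (q : ℂ) * m₂
        = τ * (x : ℂ) + (y : ℂ) := by rw [hx, hy]; push_cast; ring
    rw [hL]
    have key : Real.exp (-(-Real.log δ) * max |(m₁ : ℝ)| |(m₂ : ℝ)|)
        ≤ max (1/A) 1 * Real.sqrt (x ^ 2 + y ^ 2) := by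
      rcases eq_or_ne m₂ 0 with hm2 | hm2
      · -- m₂ = 0 case
        subst hm2
        have hne' : m₁ ≠ 0 ∨ m₃ ≠ 0 := by
          by_contra hcon
          push_neg at hcon
          exact hne (by simp [hcon.1, hcon.2])
        have h1 : (1:ℤ) ≤ m₁ ^ 2 + m₃ ^ 2 := by
          rcases hne' with hm | hm
          · nlinarith [Int.one_le_abs hm, sq_abs m₁, abs_nonneg m₁, sq_nonneg m₃]
          · nlinarith [Int.one_le_abs hm, sq_abs m₃, abs_nonneg m₃, sq_nonneg m₁]
        have h1' : (1:ℝ) ≤ x ^ 2 + y ^ 2 := by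
          have : (1:ℝ) ≤ (m₁:ℝ) ^ 2 + (m₃:ℝ) ^ 2 := by exact_mod_cast h1
          have hxe : x ^ 2 + y ^ 2 = (m₁:ℝ) ^ 2 + (m₃:ℝ) ^ 2 := by
            rw [hx, hy]; push_cast; ring
          linarith [hxe ▸ this]
        have hs : (1:ℝ) ≤ Real.sqrt (x ^ 2 + y ^ 2) := by
          rw [show (1:ℝ) = Real.sqrt 1 by simp]
          exact Real.sqrt_le_sqrt h1'
        have he : Real.exp (-(-Real.log δ) * max |(m₁ : ℝ)| |((0:ℤ) : ℝ)|) ≤ 1 := by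
          apply Real.exp_le_one_iff.2
          have : (0:ℝ) ≤ max |(m₁ : ℝ)| |((0:ℤ) : ℝ)| := le_max_of_le_right (abs_nonneg _)
          nlinarith
        calc Real.exp (-(-Real.log δ) * max |(m₁ : ℝ)| |((0:ℤ) : ℝ)|) ≤ 1 := he
          _ ≤ 1 * Real.sqrt (x ^ 2 + y ^ 2) := by linarith
          _ ≤ max (1/A) 1 * Real.sqrt (x ^ 2 + y ^ 2) := by
              apply mul_le_mul_of_nonneg_right (le_max_right _ _) (Real.sqrt_nonneg _)
      · -- m₂ ≠ 0 case
        set n : ℕ := m₂.natAbs with hn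
        have hnpos : 0 < n := Int.natAbs_pos.2 hm2
        have hcast : ((n : ℕ) : ℝ) = |(m₂ : ℝ)| := by
          rw [hn, Nat.cast_natAbs]
          exact Int.cast_abs
        have hsqle : A * δ ^ n ≤ Real.sqrt (x ^ 2 + y ^ 2) := by
          rcases lt_or_gt_of_ne hm2 with hneg | hpos
          · have := h n hnpos (-m₁) (-m₃)
            have hc2 : ((n:ℕ):ℝ) = -(m₂:ℝ) := by
              rw [hcast, abs_of_neg (by exact_mod_cast hneg)]
            have heq : ((n:ℝ) * p - ((-m₁ : ℤ):ℝ)) ^ 2 + ((n:ℝ) * q - ((-m₃ : ℤ):ℝ)) ^ 2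
                = x ^ 2 + y ^ 2 := by
              rw [hx, hy]; push_cast [hc2]; ring
            rw [heq] at this; exact this
          · have := h n hnpos m₁ m₃
            have hc2 : ((n:ℕ):ℝ) = (m₂:ℝ) := by
              rw [hcast, abs_of_pos (by exact_mod_cast hpos)]
            have heq : ((n:ℝ) * p - ((m₁ : ℤ):ℝ)) ^ 2 + ((n:ℝ) * q - ((m₃ : ℤ):ℝ)) ^ 2
                = x ^ 2 + y ^ 2 := by
              rw [hx, hy, hc2]; ring
            rw [heq] at this; exact this
        have hmaxge : (n : ℝ) ≤ max |(m₁ : ℝ)| |(m₂ : ℝ)| := by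
          rw [hcast] at *
          exact le_max_of_le_right (le_refl _)
        have hexple : Real.exp (-(-Real.log δ) * max |(m₁ : ℝ)| |(m₂ : ℝ)|) ≤ δ ^ n := by
          rw [show δ ^ n = Real.exp ((n:ℝ) * Real.log δ) by
            rw [Real.exp_nat_mul, Real.exp_log hδ0]]
          apply Real.exp_le_exp.2
          nlinarith
        calc Real.exp (-(-Real.log δ) * max |(m₁ : ℝ)| |(m₂ : ℝ)|) ≤ δ ^ n := hexple
          _ ≤ (1/A) * Real.sqrt (x ^ 2 + y ^ 2) := by
              rw [one_div_mul_eq_div, le_div_iff₀ hA]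
              nlinarith [hsqle]
          _ ≤ max (1/A) 1 * Real.sqrt (x ^ 2 + y ^ 2) :=
              mul_le_mul_of_nonneg_right (le_max_left _ _) (Real.sqrt_nonneg _)
    have hM : 0 ≤ max (1/A) 1 / c := by positivity
    calc Real.exp (-(-Real.log δ) * max |(m₁ : ℝ)| |(m₂ : ℝ)|)
        ≤ max (1/A) 1 * Real.sqrt (x ^ 2 + y ^ 2) := key
      _ = (max (1/A) 1 / c) * (c * Real.sqrt (x ^ 2 + y ^ 2)) := by
          field_simp
      _ ≤ (max (1/A) 1 / c) * ‖τ * (x:ℂ) + (y:ℂ)‖ :=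
          mul_le_mul_of_nonneg_left (hlb x y) hM
  · rintro ⟨a, ha, M, h⟩
    set k : ℝ := ‖τ‖ + 1 with hk
    have hτ0 : τ ≠ 0 := by
      intro hcon; rw [hcon] at hτ; simp at hτ
    have hkpos : 0 < k := by positivity
    have hMpos : 0 < M := by
      have h1 := h 1 0 0 (by simp)
      have habs : ‖τ * ((p : ℂ) * (0:ℤ) - (1:ℤ)) + (0:ℤ) - (q : ℂ) * (0:ℤ)‖
          = ‖τ‖ := by
        push_cast
        rw [show τ * ((p:ℂ) * 0 - 1) + 0 - (q:ℂ) * 0 = -τ by ring, norm_neg]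
      rw [habs] at h1
      have he : 0 < Real.exp (-a * max |((1:ℤ) : ℝ)| |((0:ℤ) : ℝ)|) := Real.exp_pos _
      have hτabs : 0 < ‖τ‖ := norm_pos_iff.2 hτ0
      nlinarith
    set C : ℝ := |p| + 1 with hC
    have hC1 : 1 ≤ C := by have := abs_nonneg p; linarith
    refine ⟨min (1/(M*k)) 1, lt_min (by positivity) one_pos,
      Real.exp (-(a * C)), Real.exp_pos _, Real.exp_lt_one_iff.2 (by nlinarith), ?_⟩
    intro n hn m₁ m₂
    have hexp1 : Real.exp (-(a * C)) ≤ 1 := Real.exp_le_one_iff.2 (by nlinarith)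
    have hδn1 : Real.exp (-(a * C)) ^ n ≤ 1 :=
      pow_le_one₀ (Real.exp_pos _).le hexp1
    have hn1 : (1:ℝ) ≤ (n:ℝ) := by exact_mod_cast hn
    set S : ℝ := Real.sqrt (((n:ℝ) * p - (m₁:ℝ)) ^ 2 + ((n:ℝ) * q - (m₂:ℝ)) ^ 2) with hS
    have hS0 : 0 ≤ S := Real.sqrt_nonneg _
    clear_value k
    rcases le_or_gt |(m₁:ℝ)| (C * n) with hcase | hcase
    · -- |m₁| ≤ C n
      have htrip := h m₁ (n : ℤ) m₂ (by simp [hn.ne'])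
      have hL : τ * ((p : ℂ) * ((n:ℤ):ℂ) - m₁) + m₂ - (q : ℂ) * ((n:ℤ):ℂ)
          = τ * ((p * n - m₁ : ℝ) : ℂ) + ((m₂ - q * n : ℝ) : ℂ) := by push_cast; ring
      rw [hL] at htrip
      have hub := key_ub τ (p * n - m₁) ((m₂:ℝ) - q * n)
      have hSeq : Real.sqrt ((p * (n:ℝ) - m₁) ^ 2 + ((m₂:ℝ) - q * n) ^ 2) = S := by
        rw [hS]; congr 1; ring
      rw [hSeq] at hub
      rw [← hk] at hub
      have hmax : max |(m₁:ℝ)| |(((n:ℤ)):ℝ)| ≤ C * n := by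
        apply max_le hcase
        have : |(((n:ℤ)):ℝ)| = (n:ℝ) := by
          rw [abs_of_nonneg (by positivity)]; norm_cast
        rw [this]
        nlinarith
      have hchain : Real.exp (-(a * C)) ^ n ≤ M * k * S := by
        have e1 : Real.exp (-(a * C)) ^ n = Real.exp ((n:ℝ) * (-(a * C))) := by
          rw [Real.exp_nat_mul]
        have e2 : Real.exp ((n:ℝ) * (-(a * C))) ≤
            Real.exp (-a * max |(m₁:ℝ)| |(((n:ℤ)):ℝ)|) := by
          apply Real.exp_le_exp.2
          nlinarith
        have e3 : M * ‖τ * ((p * (n:ℝ) - m₁ : ℝ) : ℂ) + (((m₂:ℝ) - q * n : ℝ) : ℂ)‖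
            ≤ M * (k * S) := mul_le_mul_of_nonneg_left hub hMpos.le
        calc Real.exp (-(a * C)) ^ n = Real.exp ((n:ℝ) * (-(a * C))) := e1
          _ ≤ Real.exp (-a * max |(m₁:ℝ)| |(((n:ℤ)):ℝ)|) := e2
          _ ≤ M * ‖τ * ((p * (n:ℝ) - m₁ : ℝ) : ℂ) + (((m₂:ℝ) - q * n : ℝ) : ℂ)‖ :=
              htrip
          _ ≤ M * (k * S) := e3
          _ = M * k * S := by ring
      calc min (1/(M*k)) 1 * Real.exp (-(a * C)) ^ n
          ≤ (1/(M*k)) * Real.exp (-(a * C)) ^ n :=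
            mul_le_mul_of_nonneg_right (min_le_left _ _) (by positivity)
        _ ≤ (1/(M*k)) * (M * k * S) :=
            mul_le_mul_of_nonneg_left hchain (by positivity)
        _ = S := by field_simp
    · -- |m₁| > C n
      have hS1 : 1 ≤ S := by
        have habs : |(n:ℝ) * p - m₁| ≤ S := by
          rw [hS, ← Real.sqrt_sq_eq_abs]
          exact Real.sqrt_le_sqrt (by nlinarith [sq_nonneg ((n:ℝ) * q - m₂)])
        have h2 : |(m₁:ℝ)| - |(n:ℝ) * p| ≤ |(n:ℝ) * p - m₁| := by
          have := abs_sub_abs_le_abs_sub ((m₁:ℝ)) ((n:ℝ) * p)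
          calc |(m₁:ℝ)| - |(n:ℝ) * p| ≤ |(m₁:ℝ) - (n:ℝ) * p| := this
            _ = |(n:ℝ) * p - m₁| := abs_sub_comm _ _
        have h3 : |(n:ℝ) * p| = (n:ℝ) * |p| := by
          rw [abs_mul, abs_of_nonneg (Nat.cast_nonneg n)]
        have h4 : C * (n:ℝ) = |p| * (n:ℝ) + n := by rw [hC]; ring
        linarith [habs, h2, h3, hcase, hn1, h4]
      calc min (1/(M*k)) 1 * Real.exp (-(a * C)) ^ n
          ≤ 1 * 1 := by
            apply mul_le_mul (min_le_right _ _) hδn1 (by positivity)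
            norm_num
        _ = 1 := by norm_num
        _ ≤ S := hS1
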